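/- Let (V, σ, F) satisfy P0–P4 and AP1 with four consecutive circle vertices m2, m1, p1, p2 signed −, −, +, +. Then there do not simultaneously exist an m1-dangerous pair and a p1-dangerous pair in F. -/
import Mathlib


/-- A set of vertices on the circle `ZMod n` is a circular interval if it consists of
consecutive vertices. -/
def IsCircularInterval {n : ℕ} (U : Set (ZMod n)) : Prop :=
  ∃ (a : ZMod n) (k : ℕ), U = {x | ∃ i : ℕ, i < k ∧ x = a + (i : ZMod n)}

section Aux

lemma zrec {n : ℕ} [NeZero n] (a y : ZMod n) : a + ((y - a).val : ZMod n) = y := by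
  rw [ZMod.natCast_rightInverse (y - a)]; ring

lemma interval_start {n : ℕ} [NeZero n] {U : Set (ZMod n)}
    (hU : IsCircularInterval U)
    {b : ZMod n} (hb : b ∈ U) (hb' : b - 1 ∉ U) :
    ∃ K, K ≤ n ∧ ∀ y, y ∈ U ↔ (y - b).val < K := by
  obtain ⟨a, k, rfl⟩ := hU
  have hkn : k ≤ n := by
    by_contra hk
    exact hb' ⟨(b - 1 - a).val, by have := ZMod.val_lt (b - 1 - a); omega,
      (zrec a (b - 1)).symm⟩
  obtain ⟨i0, hi0k, hi0⟩ := hb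
  have hi00 : i0 = 0 := by
    by_contra h0
    apply hb'
    refine ⟨i0 - 1, by omega, ?_⟩
    have hc : ((i0 - 1 : ℕ) : ZMod n) = (i0 : ZMod n) - 1 := by
      have := Nat.cast_sub (R := ZMod n) (by omega : 1 ≤ i0)
      simpa using this
    rw [hi0, hc]; ring
  rw [hi00] at hi0
  simp only [Nat.cast_zero, add_zero] at hi0
  subst hi0
  refine ⟨k, hkn, fun y => ⟨?_, ?_⟩⟩
  · rintro ⟨i, hik, rfl⟩
    rw [show b + (i : ZMod n) - b = (i : ZMod n) by ring,
      ZMod.val_natCast_of_lt (lt_of_lt_of_le hik hkn)]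
    exact hik
  · intro h
    exact ⟨(y - b).val, h, (zrec b y).symm⟩

lemma interval_tail {n : ℕ} [NeZero n] {W : Set (ZMod n)}
    (hW : IsCircularInterval W)
    {b x z : ZMod n} (hbW : b ∉ W) (hxW : x ∈ W) (hzW : z ∈ W)
    (hz : (z - b).val = n - 1) :
    ∀ y, (x - b).val ≤ (y - b).val → y ∈ W := by
  obtain ⟨w, l, rfl⟩ := hW
  have hn0 : 0 < n := Nat.pos_of_ne_zero (NeZero.ne n)
  have hln : l ≤ n := by
    by_contra hl
    exact hbW ⟨(b - w).val, by have := ZMod.val_lt (b - w); omega, (zrec w b).symm⟩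
  set j0 := (w - b).val with hj0
  have key : ∀ i, i < l → (w + (i : ZMod n) - b).val = j0 + i := by
    intro i
    induction i with
    | zero => intro _; simp [hj0]
    | succ i ih =>
      intro hil
      have hi : i < l := by omega
      have hiv := ih hi
      have hvlt : j0 + i < n := by
        have := ZMod.val_lt (w + (i : ZMod n) - b); omega
      have h1 : w + (i : ZMod n) - b = ((j0 + i : ℕ) : ZMod n) := by
        rw [← hiv, ZMod.natCast_rightInverse (w + (i : ZMod n) - b)]
      have hcast : w + ((i + 1 : ℕ) : ZMod n) - b = ((j0 + i + 1 : ℕ) : ZMod n) := by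
        push_cast
        push_cast at h1
        linear_combination h1
      by_cases hn' : j0 + i + 1 = n
      · exfalso
        apply hbW
        have hz0 : ((j0 + i + 1 : ℕ) : ZMod n) = 0 := by
          rw [hn']; exact ZMod.natCast_self n
        refine ⟨i + 1, hil, ?_⟩
        have hc2 := hcast
        rw [hz0] at hc2
        linear_combination -hc2
      · rw [hcast, ZMod.val_natCast_of_lt (by omega)]; omega
  obtain ⟨iz, hizl, hziz⟩ := hzW
  have hz' : j0 + iz = n - 1 := by
    have := key iz hizl
    rw [← hziz] at this
    omega
  obtain ⟨ix, hixl, hxix⟩ := hxW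
  have hx' : (x - b).val = j0 + ix := by rw [hxix]; exact key ix hixl
  intro y hy
  have hjylt : (y - b).val < n := ZMod.val_lt _
  have h2 : (y - b).val - j0 < l := by omega
  refine ⟨(y - b).val - j0, h2, ?_⟩
  have hval : (w + (((y - b).val - j0 : ℕ) : ZMod n) - b).val = (y - b).val := by
    rw [key _ h2]; omega
  have heq : w + (((y - b).val - j0 : ℕ) : ZMod n) - b = y - b := by
    have e1 := ZMod.natCast_rightInverse (w + (((y - b).val - j0 : ℕ) : ZMod n) - b)
    have e2 := ZMod.natCast_rightInverse (y - b)
    have := congrArg (Nat.cast : ℕ → ZMod n) hval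
    rwa [e1, e2] at this
  linear_combination -heq

lemma noB {n : ℕ} (σ : ZMod n → Bool) (F : Set (Set (ZMod n)))
    (hF : ∀ U ∈ F, U ≠ ∅ ∧ U ≠ Set.univ)
    (hP1 : ∀ U ∈ F, ∀ W ∈ F, (U ∩ W).Nonempty → U ∪ W ≠ Set.univ →
      U ∩ W ∈ F ∧ U ∪ W ∈ F)
    (hP2 : ∀ U ∈ F, (∃ u ∈ U, σ u = true) ∧ (∃ v ∉ U, σ v = false))
    (hP4 : ∀ U ∈ F, ∀ W ∈ F, U ∪ W = Set.univ → ∃ u ∈ U ∩ W, σ u = true)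
    {p1 : ZMod n} {W W' U U' : Set (ZMod n)}
    (hWF : W ∈ F) (hW'F : W' ∈ F) (hUF : U ∈ F) (hU'F : U' ∈ F)
    (hWd : W ∩ W' = ∅)
    (hUd : U ∪ U' = Set.univ)
    (hUpos : ∀ x ∈ U ∩ U', σ x = true → x = p1)
    (hp1W : p1 ∉ W) (hp1W' : p1 ∉ W') :
    W ∪ U ≠ Set.univ := by
  intro h
  have hWU' : W ∪ U' ≠ Set.univ := by
    intro h'
    obtain ⟨⟨x, hxW', hxpos⟩, -⟩ := hP2 W' hW'F
    have hxW : x ∉ W := fun hxW => by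
      have hm : x ∈ W ∩ W' := ⟨hxW, hxW'⟩
      rw [hWd] at hm; exact hm
    have hxU : x ∈ U := by
      have hm : x ∈ W ∪ U := h ▸ Set.mem_univ x
      rcases hm with h1 | h1
      · exact absurd h1 hxW
      · exact h1
    have hxU' : x ∈ U' := by
      have hm : x ∈ W ∪ U' := h' ▸ Set.mem_univ x
      rcases hm with h1 | h1
      · exact absurd h1 hxW
      · exact h1
    exact hp1W' (hUpos x ⟨hxU, hxU'⟩ hxpos ▸ hxW')
  have hWU'e : W ∩ U' = ∅ := by
    by_contra hne
    have hne' : (W ∩ U').Nonempty := Set.nonempty_iff_ne_empty.mpr hne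
    obtain ⟨hYF, -⟩ := hP1 W hWF U' hU'F hne' hWU'
    have hcov : (W ∩ U') ∪ U = Set.univ := by
      apply Set.eq_univ_of_forall
      intro y
      by_cases hyU : y ∈ U
      · exact Or.inr hyU
      · refine Or.inl ⟨?_, ?_⟩
        · have hm : y ∈ W ∪ U := h ▸ Set.mem_univ y
          rcases hm with h1 | h1
          · exact h1
          · exact absurd h1 hyU
        · have hm : y ∈ U ∪ U' := hUd ▸ Set.mem_univ y
          rcases hm with h1 | h1
          · exact absurd h1 hyU
          · exact h1
    obtain ⟨u, ⟨⟨huW, huU'⟩, huU⟩, hupos⟩ := hP4 _ hYF U hUF hcov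
    exact hp1W (hUpos u ⟨huU, huU'⟩ hupos ▸ huW)
  apply (hF U hUF).2
  apply Set.eq_univ_of_forall
  intro y
  have hm : y ∈ U ∪ U' := hUd ▸ Set.mem_univ y
  rcases hm with h1 | h1
  · exact h1
  · have hm2 : y ∈ W ∪ U := h ▸ Set.mem_univ y
    rcases hm2 with h2 | h2
    · exfalso
      have hm3 : y ∈ W ∩ U' := ⟨h2, h1⟩
      rw [hWU'e] at hm3; exact hm3
    · exact h2

lemma key {n : ℕ} (hn : 4 ≤ n)
    (σ : ZMod n → Bool) (F : Set (Set (ZMod n)))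
    (hF : ∀ U ∈ F, U ≠ ∅ ∧ U ≠ Set.univ)
    (hP0 : ∀ U ∈ F, IsCircularInterval U)
    (hP1 : ∀ U ∈ F, ∀ W ∈ F, (U ∩ W).Nonempty → U ∪ W ≠ Set.univ →
      U ∩ W ∈ F ∧ U ∪ W ∈ F)
    (hP2 : ∀ U ∈ F, (∃ u ∈ U, σ u = true) ∧ (∃ v ∉ U, σ v = false))
    (hP3 : ∀ U ∈ F, ∀ W ∈ F, U ∩ W = ∅ → ∃ v ∉ U ∪ W, σ v = false)
    (hP4 : ∀ U ∈ F, ∀ W ∈ F, U ∪ W = Set.univ → ∃ u ∈ U ∩ W, σ u = true)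
    (hAP1 : ∀ U ∈ F, ∀ u ∈ U, σ u = true →
      ∀ u', u' ∉ U → (u' = u + 1 ∨ u = u' + 1) → σ u' = true)
    (m2 m1 p1 p2 : ZMod n)
    (hm1 : m1 = m2 + 1) (hp1 : p1 = m2 + 2) (hp2 : p2 = m2 + 3)
    (hσm2 : σ m2 = false) (hσm1 : σ m1 = false)
    (hσp1 : σ p1 = true) (hσp2 : σ p2 = true)
    {W1 W2 U1 U2 : Set (ZMod n)}
    (hW1F : W1 ∈ F) (hW2F : W2 ∈ F) (hU1F : U1 ∈ F) (hU2F : U2 ∈ F)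
    (hWd : W1 ∩ W2 = ∅) (hm1W : m1 ∉ W1 ∪ W2)
    (hWneg : ∀ x ∉ W1 ∪ W2, σ x = false → x = m1)
    (hUd : U1 ∪ U2 = Set.univ) (hp1U : p1 ∈ U1 ∩ U2)
    (hUpos : ∀ x ∈ U1 ∩ U2, σ x = true → x = p1)
    (hm2W1 : m2 ∈ W1) (hp2U1 : p2 ∈ U1) : False := by
  haveI : NeZero n := ⟨by omega⟩
  haveI : Fact (1 < n) := ⟨by omega⟩
  have nz1 : (1 : ZMod n) ≠ 0 := by
    intro h
    have hv := congrArg ZMod.val h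
    rw [ZMod.val_one, ZMod.val_zero] at hv
    omega
  have nz2 : (2 : ZMod n) ≠ 0 := by
    intro h
    have h2 : ((2 : ℕ) : ZMod n) = 0 := by push_cast; exact h
    have hv := congrArg ZMod.val h2
    rw [ZMod.val_natCast_of_lt (by omega), ZMod.val_zero] at hv
    omega
  have hp1m1 : p1 = m1 + 1 := by rw [hp1, hm1]; ring
  have hm1m2 : m1 - 1 = m2 := by rw [hm1]; ring
  have hne_p2p1 : p2 ≠ p1 := by
    intro h
    rw [hp2, hp1] at h
    exact nz1 (by linear_combination h)
  -- AP1 consequences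
  have hm1U1 : m1 ∈ U1 := by
    by_contra hc
    have hh := hAP1 U1 hU1F p1 hp1U.1 hσp1 m1 hc (Or.inr hp1m1)
    rw [hσm1] at hh; exact Bool.false_ne_true hh
  have hm1U2 : m1 ∈ U2 := by
    by_contra hc
    have hh := hAP1 U2 hU2F p1 hp1U.2 hσp1 m1 hc (Or.inr hp1m1)
    rw [hσm1] at hh; exact Bool.false_ne_true hh
  have hp1W1 : p1 ∉ W1 := by
    intro hc
    have hm1n : m1 ∉ W1 := fun h => hm1W (Or.inl h)
    have hh := hAP1 W1 hW1F p1 hc hσp1 m1 hm1n (Or.inr hp1m1)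
    rw [hσm1] at hh; exact Bool.false_ne_true hh
  have hp1W2 : p1 ∉ W2 := by
    intro hc
    have hm1n : m1 ∉ W2 := fun h => hm1W (Or.inr h)
    have hh := hAP1 W2 hW2F p1 hc hσp1 m1 hm1n (Or.inr hp1m1)
    rw [hσm1] at hh; exact Bool.false_ne_true hh
  have hp2U2 : p2 ∉ U2 := fun hc => hne_p2p1 (hUpos p2 ⟨hp2U1, hc⟩ hσp2)
  -- symmetric forms
  have hWd' : W2 ∩ W1 = ∅ := by rw [Set.inter_comm]; exact hWd
  have hUd' : U2 ∪ U1 = Set.univ := by rw [Set.union_comm]; exact hUd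
  have hUpos' : ∀ x ∈ U2 ∩ U1, σ x = true → x = p1 :=
    fun x hx h => hUpos x ⟨hx.2, hx.1⟩ h
  have hWneg' : ∀ x ∉ W2 ∪ W1, σ x = false → x = m1 :=
    fun x hx h => hWneg x (by rwa [Set.union_comm]) h
  -- no union with the U's is everything
  have nB11 : W1 ∪ U1 ≠ Set.univ :=
    noB σ F hF hP1 hP2 hP4 hW1F hW2F hU1F hU2F hWd hUd hUpos hp1W1 hp1W2
  have nB12 : W1 ∪ U2 ≠ Set.univ :=
    noB σ F hF hP1 hP2 hP4 hW1F hW2F hU2F hU1F hWd hUd' hUpos' hp1W1 hp1W2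
  have nB21 : W2 ∪ U1 ≠ Set.univ :=
    noB σ F hF hP1 hP2 hP4 hW2F hW1F hU1F hU2F hWd' hUd hUpos hp1W2 hp1W1
  have nB22 : W2 ∪ U2 ≠ Set.univ :=
    noB σ F hF hP1 hP2 hP4 hW2F hW1F hU2F hU1F hWd' hUd' hUpos' hp1W2 hp1W1
  -- m2 ∈ U2
  have hm2U2 : m2 ∈ U2 := by
    by_contra hc
    obtain ⟨K, hKn, hKiff⟩ := interval_start (hP0 U2 hU2F) hm1U2 (by rw [hm1m2]; exact hc)
    have hK2l : (p1 - m1).val < K := (hKiff p1).1 hp1U.2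
    have e1 : p1 - m1 = 1 := by rw [hp1, hm1]; ring
    rw [e1, ZMod.val_one] at hK2l
    have hK2u : ¬ (p2 - m1).val < K := fun h => hp2U2 ((hKiff p2).2 h)
    have e2 : p2 - m1 = ((2 : ℕ) : ZMod n) := by push_cast; rw [hp2, hm1]; ring
    rw [e2, ZMod.val_natCast_of_lt (by omega)] at hK2u
    have hK : K = 2 := by omega
    apply (hF U1 hU1F).2
    apply Set.eq_univ_of_forall
    intro y
    have hm : y ∈ U1 ∪ U2 := hUd ▸ Set.mem_univ y
    rcases hm with h1 | h1
    · exact h1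
    · have hv := (hKiff y).1 h1
      rw [hK] at hv
      have hvv : (y - m1).val = 0 ∨ (y - m1).val = 1 := by omega
      rcases hvv with h0 | h0
      · have : y = m1 := by
          have hz := (ZMod.val_eq_zero (y - m1)).mp h0
          linear_combination hz
        exact this ▸ hm1U1
      · have : y = p1 := by
          have hr := zrec m1 y
          rw [h0] at hr
          rw [hp1m1, ← hr]
          push_cast
          ring
        exact this ▸ hp1U.1
  -- transfer lemma
  have trans : ∀ W W' U : Set (ZMod n), W ∈ F → W' ∈ F → U ∈ F →
      W ∩ W' = ∅ → (∀ x ∉ W ∪ W', σ x = false → x = m1) →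
      W ∪ U ≠ Set.univ → m1 ∈ U → (W ∩ U).Nonempty → (W' ∩ U).Nonempty := by
    intro W W' U hWF hW'F hUF hd hneg hnu hm1U hne
    by_contra hc
    have hc' : W' ∩ U = ∅ := Set.not_nonempty_iff_eq_empty.mp hc
    obtain ⟨-, hZF⟩ := hP1 W hWF U hUF hne hnu
    have hdis : (W ∪ U) ∩ W' = ∅ := by
      ext y
      simp only [Set.mem_inter_iff, Set.mem_union, Set.mem_empty_iff_false, iff_false,
        not_and]
      rintro (h1 | h1) h2
      · have hm : y ∈ W ∩ W' := ⟨h1, h2⟩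
        rw [hd] at hm; exact hm
      · have hm : y ∈ W' ∩ U := ⟨h2, h1⟩
        rw [hc'] at hm; exact hm
    obtain ⟨v, hv, hvneg⟩ := hP3 _ hZF W' hW'F hdis
    have hvm1 : v = m1 := by
      apply hneg v ?_ hvneg
      rintro (h1 | h1)
      · exact hv (Or.inl (Or.inl h1))
      · exact hv (Or.inr h1)
    exact hv (Or.inl (Or.inr (hvm1 ▸ hm1U)))
  -- all four intersections nonempty
  have hA12 : (W1 ∩ U2).Nonempty := ⟨m2, hm2W1, hm2U2⟩
  have hA22 : (W2 ∩ U2).Nonempty :=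
    trans W1 W2 U2 hW1F hW2F hU2F hWd hWneg nB12 hm1U2 hA12
  have hA11 : (W1 ∩ U1).Nonempty := by
    by_contra hc
    have hc2 : ¬ (W2 ∩ U1).Nonempty := fun h2 =>
      hc (trans W2 W1 U1 hW2F hW1F hU1F hWd' hWneg' nB21 hm1U1 h2)
    have hc' : W1 ∩ U1 = ∅ := Set.not_nonempty_iff_eq_empty.mp hc
    have hc2' : W2 ∩ U1 = ∅ := Set.not_nonempty_iff_eq_empty.mp hc2
    obtain ⟨-, v, hvU2, hvneg⟩ := hP2 U2 hU2F
    have hvU1 : v ∈ U1 := by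
      have hm : v ∈ U1 ∪ U2 := hUd ▸ Set.mem_univ v
      rcases hm with h1 | h1
      · exact h1
      · exact absurd h1 hvU2
    have hvm1 : v = m1 := by
      apply hWneg v ?_ hvneg
      rintro (h1 | h1)
      · have hm : v ∈ W1 ∩ U1 := ⟨h1, hvU1⟩
        rw [hc'] at hm; exact hm
      · have hm : v ∈ W2 ∩ U1 := ⟨h1, hvU1⟩
        rw [hc2'] at hm; exact hm
    exact hvU2 (hvm1 ▸ hm1U2)
  have hA21 : (W2 ∩ U1).Nonempty :=
    trans W1 W2 U1 hW1F hW2F hU1F hWd hWneg nB11 hm1U1 hA11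
  -- no W meets U1 ∩ U2
  have capW : ∀ W : Set (ZMod n), W ∈ F → p1 ∉ W → (W ∩ U1).Nonempty →
      (W ∩ U2).Nonempty → W ∪ U1 ≠ Set.univ → W ∪ U2 ≠ Set.univ →
      ∀ x, x ∈ W → x ∈ U1 → x ∈ U2 → False := by
    intro W hWF hp1W h1 h2 hn1 hn2 x hxW hxU1 hxU2
    obtain ⟨Y1F, -⟩ := hP1 W hWF U1 hU1F h1 hn1
    obtain ⟨Y2F, -⟩ := hP1 W hWF U2 hU2F h2 hn2
    have hne : ((W ∩ U1) ∩ (W ∩ U2)).Nonempty := ⟨x, ⟨hxW, hxU1⟩, hxW, hxU2⟩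
    have hnu : (W ∩ U1) ∪ (W ∩ U2) ≠ Set.univ := by
      intro h
      apply (hF W hWF).2
      apply Set.eq_univ_of_forall
      intro y
      have hm : y ∈ (W ∩ U1) ∪ (W ∩ U2) := h ▸ Set.mem_univ y
      rcases hm with h1 | h1 <;> exact h1.1
    obtain ⟨hYF, -⟩ := hP1 _ Y1F _ Y2F hne hnu
    obtain ⟨⟨y, hy, hypos⟩, -⟩ := hP2 _ hYF
    exact hp1W (hUpos y ⟨hy.1.2, hy.2.2⟩ hypos ▸ hy.1.1)
  -- every element of U1 ∩ U2 is m1 or p1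
  have hUcap : ∀ x, x ∈ U1 → x ∈ U2 → x = m1 ∨ x = p1 := by
    intro x hx1 hx2
    cases hσx : σ x with
    | true => exact Or.inr (hUpos x ⟨hx1, hx2⟩ hσx)
    | false =>
      refine Or.inl (hWneg x ?_ hσx)
      rintro (h1 | h1)
      · exact capW W1 hW1F hp1W1 hA11 hA12 nB11 nB12 x h1 hx1 hx2
      · exact capW W2 hW2F hp1W2 hA21 hA22 nB21 nB22 x h1 hx1 hx2
  have hm2U1 : m2 ∉ U1 := by
    intro hc
    rcases hUcap m2 hc hm2U2 with h | h
    · rw [hm1] at h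
      exact nz1 (by linear_combination -h)
    · rw [hp1] at h
      exact nz2 (by linear_combination -h)
  -- interval structure of U1 and W1
  obtain ⟨K1, hK1n, hK1iff⟩ :=
    interval_start (hP0 U1 hU1F) hm1U1 (by rw [hm1m2]; exact hm2U1)
  obtain ⟨x, hxW1, hxU1⟩ := hA11
  have hm2val : (m2 - m1).val = n - 1 := by
    have e : m2 - m1 = ((n - 1 : ℕ) : ZMod n) := by
      have e' : ((n - 1 : ℕ) : ZMod n) = (n : ZMod n) - 1 := by
        have := Nat.cast_sub (R := ZMod n) (by omega : 1 ≤ n)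
        simpa using this
      rw [e', ZMod.natCast_self, hm1]; ring
    rw [e, ZMod.val_natCast_of_lt (by omega)]
  have hm1W1 : m1 ∉ W1 := fun h => hm1W (Or.inl h)
  have htail := interval_tail (hP0 W1 hW1F) hm1W1 hxW1 hm2W1 hm2val
  apply nB11
  apply Set.eq_univ_of_forall
  intro y
  by_cases hy : (y - m1).val < K1
  · exact Or.inr ((hK1iff y).2 hy)
  · refine Or.inl (htail y ?_)
    have hx' : (x - m1).val < K1 := (hK1iff x).1 hxU1
    omega

end Aux

/-- Let `(V, σ, F)` satisfy P0–P4 and AP1 with four consecutive circle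
vertices `m2, m1, p1, p2` signed `−, −, +, +`. Then there do not simultaneously exist an
`m1`-dangerous pair (`W1, W2 ∈ F` disjoint with `m1` the only negative vertex outside
`W1 ∪ W2`) and a `p1`-dangerous pair (`U1, U2 ∈ F` with `U1 ∪ U2 = V` and `p1` the only
positive vertex of `U1 ∩ U2`). (`true` = `+`, `false` = `−`; the circle is `ZMod n`.) -/
theorem stmt_13 {n : ℕ} (hn : 4 ≤ n)
    (σ : ZMod n → Bool) (F : Set (Set (ZMod n)))
    (hF : ∀ U ∈ F, U ≠ ∅ ∧ U ≠ Set.univ)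
    (hP0 : ∀ U ∈ F, IsCircularInterval U)
    (hP1 : ∀ U ∈ F, ∀ W ∈ F, (U ∩ W).Nonempty → U ∪ W ≠ Set.univ →
      U ∩ W ∈ F ∧ U ∪ W ∈ F)
    (hP2 : ∀ U ∈ F, (∃ u ∈ U, σ u = true) ∧ (∃ v ∉ U, σ v = false))
    (hP3 : ∀ U ∈ F, ∀ W ∈ F, U ∩ W = ∅ → ∃ v ∉ U ∪ W, σ v = false)
    (hP4 : ∀ U ∈ F, ∀ W ∈ F, U ∪ W = Set.univ → ∃ u ∈ U ∩ W, σ u = true)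
    (hAP1 : ∀ U ∈ F, ∀ u ∈ U, σ u = true →
      ∀ u', u' ∉ U → (u' = u + 1 ∨ u = u' + 1) → σ u' = true)
    (m2 m1 p1 p2 : ZMod n)
    (hm1 : m1 = m2 + 1) (hp1 : p1 = m2 + 2) (hp2 : p2 = m2 + 3)
    (hσm2 : σ m2 = false) (hσm1 : σ m1 = false)
    (hσp1 : σ p1 = true) (hσp2 : σ p2 = true) :
    ¬ ((∃ W1 ∈ F, ∃ W2 ∈ F, W1 ∩ W2 = ∅ ∧ m1 ∉ W1 ∪ W2 ∧
          ∀ x ∉ W1 ∪ W2, σ x = false → x = m1) ∧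
       (∃ U1 ∈ F, ∃ U2 ∈ F, U1 ∪ U2 = Set.univ ∧ p1 ∈ U1 ∩ U2 ∧
          ∀ x ∈ U1 ∩ U2, σ x = true → x = p1)) := by
  rintro ⟨⟨W1, hW1F, W2, hW2F, hWd, hm1W, hWneg⟩,
          ⟨U1, hU1F, U2, hU2F, hUd, hp1U, hUpos⟩⟩
  haveI : NeZero n := ⟨by omega⟩
  haveI : Fact (1 < n) := ⟨by omega⟩
  have nz1 : (1 : ZMod n) ≠ 0 := by
    intro h
    have hv := congrArg ZMod.val h
    rw [ZMod.val_one, ZMod.val_zero] at hv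
    omega
  have hm2W : m2 ∈ W1 ∪ W2 := by
    by_contra hc
    have h := hWneg m2 hc hσm2
    rw [hm1] at h
    exact nz1 (by linear_combination -h)
  have hp2U : p2 ∈ U1 ∪ U2 := by rw [hUd]; trivial
  have hWd' : W2 ∩ W1 = ∅ := by rw [Set.inter_comm]; exact hWd
  have hm1W' : m1 ∉ W2 ∪ W1 := by rwa [Set.union_comm]
  have hWneg' : ∀ x ∉ W2 ∪ W1, σ x = false → x = m1 :=
    fun x hx h => hWneg x (by rwa [Set.union_comm]) h
  have hUd' : U2 ∪ U1 = Set.univ := by rw [Set.union_comm]; exact hUd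
  have hp1U' : p1 ∈ U2 ∩ U1 := ⟨hp1U.2, hp1U.1⟩
  have hUpos' : ∀ x ∈ U2 ∩ U1, σ x = true → x = p1 :=
    fun x hx h => hUpos x ⟨hx.2, hx.1⟩ h
  rcases hm2W with hm2 | hm2 <;> rcases hp2U with hp2' | hp2'
  · exact key hn σ F hF hP0 hP1 hP2 hP3 hP4 hAP1 m2 m1 p1 p2 hm1 hp1 hp2
      hσm2 hσm1 hσp1 hσp2 hW1F hW2F hU1F hU2F hWd hm1W hWneg hUd hp1U hUpos hm2 hp2'
  · exact key hn σ F hF hP0 hP1 hP2 hP3 hP4 hAP1 m2 m1 p1 p2 hm1 hp1 hp2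
      hσm2 hσm1 hσp1 hσp2 hW1F hW2F hU2F hU1F hWd hm1W hWneg hUd' hp1U' hUpos' hm2 hp2'
  · exact key hn σ F hF hP0 hP1 hP2 hP3 hP4 hAP1 m2 m1 p1 p2 hm1 hp1 hp2
      hσm2 hσm1 hσp1 hσp2 hW2F hW1F hU1F hU2F hWd' hm1W' hWneg' hUd hp1U hUpos hm2 hp2'
  · exact key hn σ F hF hP0 hP1 hP2 hP3 hP4 hAP1 m2 m1 p1 p2 hm1 hp1 hp2
      hσm2 hσm1 hσp1 hσp2 hW2F hW1F hU2F hU1F hWd' hm1W' hWneg' hUd' hp1U' hUpos' hm2 hp2'
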